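/- Let Φ be continuous monotone increasing on I with Φ(I) = 𝓘, and let Ψ be monotone increasing on 𝓘 with bounded integrable density ψ ≥ 0 (i.e., Ψ(y₂)−Ψ(y₁)=∫_{y₁}^{y₂}ψ). Let f be bounded on 𝓘 with |f| ≤ M_f. If both (f∘Φ)(ψ∘Φ) is Darboux–Stieltjes integrable with respect to Φ and ψ is Riemann integrable, then f∘Φ is Darboux–Stieltjes integrable with respect to Ψ∘Φ on I and ∫_I (f∘Φ) d(Ψ∘Φ) = ∫_I (f∘Φ)(ψ∘Φ) dΦ. -/

import Mathlib

open Set Filter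

/-- `p 0, p 1, …, p n` is a partition of `[a,b]`. -/
def IsPartition (a b : ℝ) (n : ℕ) (p : ℕ → ℝ) : Prop :=
  p 0 = a ∧ p n = b ∧ ∀ i < n, p i ≤ p (i + 1)

/-- Upper Darboux–Stieltjes sum of `f` with respect to the integrator `G` along a partition. -/
noncomputable def upperSum (f G : ℝ → ℝ) (n : ℕ) (p : ℕ → ℝ) : ℝ :=
  ∑ i ∈ Finset.range n, sSup (f '' Set.Icc (p i) (p (i + 1))) * (G (p (i + 1)) - G (p i))

/-- Lower Darboux–Stieltjes sum. -/
noncomputable def lowerSum (f G : ℝ → ℝ) (n : ℕ) (p : ℕ → ℝ) : ℝ :=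
  ∑ i ∈ Finset.range n, sInf (f '' Set.Icc (p i) (p (i + 1))) * (G (p (i + 1)) - G (p i))

def upperSums (f G : ℝ → ℝ) (a b : ℝ) : Set ℝ :=
  {s | ∃ n p, IsPartition a b n p ∧ s = upperSum f G n p}

def lowerSums (f G : ℝ → ℝ) (a b : ℝ) : Set ℝ :=
  {s | ∃ n p, IsPartition a b n p ∧ s = lowerSum f G n p}

/-- Darboux–Stieltjes integrability of `f` with respect to `G` on `[a,b]`. -/
def DSIntegrable (f G : ℝ → ℝ) (a b : ℝ) : Prop :=
  sInf (upperSums f G a b) = sSup (lowerSums f G a b)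

/-- The Darboux–Stieltjes integral (the infimum of upper sums). -/
noncomputable def DSIntegral (f G : ℝ → ℝ) (a b : ℝ) : ℝ :=
  sInf (upperSums f G a b)

/-- Oriented Darboux–Stieltjes integrability on the interval from `a` to `b`. -/
def oDSIntegrable (f G : ℝ → ℝ) (a b : ℝ) : Prop :=
  DSIntegrable f G (min a b) (max a b)

/-- Oriented Darboux–Stieltjes integral on the interval from `a` to `b`. -/
noncomputable def oDSIntegral (f G : ℝ → ℝ) (a b : ℝ) : ℝ :=
  if a ≤ b then DSIntegral f G a b else -DSIntegral f G b a

/-- `f` is bounded on `s`. -/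
def BddOn (f : ℝ → ℝ) (s : Set ℝ) : Prop := ∃ M, ∀ x ∈ s, |f x| ≤ M

/-- The oscillation of `f` on a set. -/
noncomputable def osc (f : ℝ → ℝ) (s : Set ℝ) : ℝ := sSup (f '' s) - sInf (f '' s)

/-- `v` is the Riemann–Stieltjes integral of `f` with respect to `G` on `[a,b]`,
as a limit of Riemann–Stieltjes sums as the mesh of tagged partitions tends to `0`. -/
def RSIntegralTo (f G : ℝ → ℝ) (a b v : ℝ) : Prop :=
  ∀ ε > 0, ∃ δ > 0, ∀ (n : ℕ) (p t : ℕ → ℝ), IsPartition a b n p →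
    (∀ i < n, p (i + 1) - p i < δ) → (∀ i < n, t i ∈ Set.Icc (p i) (p (i + 1))) →
    |(∑ i ∈ Finset.range n, f (t i) * (G (p (i + 1)) - G (p i))) - v| < ε

/-- Riemann–Stieltjes integrability. -/
def RSIntegrable (f G : ℝ → ℝ) (a b : ℝ) : Prop := ∃ v, RSIntegralTo f G a b v
namespace DS13

theorem part_mono {a b : ℝ} {n : ℕ} {p : ℕ → ℝ} (hp : IsPartition a b n p)
    {i j : ℕ} (hij : i ≤ j) (hj : j ≤ n) : p i ≤ p j := by
  induction j with
  | zero => exact le_of_eq (congrArg p (Nat.le_zero.mp hij))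
  | succ j ih =>
    rcases Nat.eq_or_lt_of_le hij with h | h
    · exact le_of_eq (congrArg p h)
    · exact le_trans (ih (Nat.lt_succ_iff.mp h) (by omega)) (hp.2.2 j (by omega))

theorem part_mem {a b : ℝ} {n : ℕ} {p : ℕ → ℝ} (hp : IsPartition a b n p)
    {i : ℕ} (hi : i ≤ n) : p i ∈ Set.Icc a b :=
  ⟨hp.1 ▸ part_mono hp (Nat.zero_le i) hi, hp.2.1 ▸ part_mono hp hi le_rfl⟩

theorem img_ne {h : ℝ → ℝ} {c d : ℝ} (hcd : c ≤ d) : (h '' Set.Icc c d).Nonempty :=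
  ⟨h c, ⟨c, ⟨le_rfl, hcd⟩, rfl⟩⟩

theorem img_bddAbove {h : ℝ → ℝ} {M : ℝ} {t s : Set ℝ} (hM : ∀ x ∈ t, |h x| ≤ M)
    (hst : s ⊆ t) : BddAbove (h '' s) :=
  ⟨M, by rintro _ ⟨x, hx, rfl⟩; exact (abs_le.mp (hM x (hst hx))).2⟩

theorem img_bddBelow {h : ℝ → ℝ} {M : ℝ} {t s : Set ℝ} (hM : ∀ x ∈ t, |h x| ≤ M)
    (hst : s ⊆ t) : BddBelow (h '' s) :=
  ⟨-M, by rintro _ ⟨x, hx, rfl⟩; exact (abs_le.mp (hM x (hst hx))).1⟩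

theorem tel (F : ℕ → ℝ) : ∀ {u v : ℕ}, u ≤ v →
    ∑ i ∈ Finset.Ico u v, (F (i + 1) - F i) = F v - F u := by
  intro u v huv
  induction v with
  | zero =>
    have : u = 0 := Nat.le_zero.mp huv
    subst this; simp
  | succ v ih =>
    rcases Nat.eq_or_lt_of_le huv with h | h
    · rw [← h]; simp
    · have huv' : u ≤ v := Nat.lt_succ_iff.mp h
      rw [Finset.sum_Ico_succ_top huv', ih huv']; ring

theorem chain_le (c : ℕ → ℕ) : ∀ m : ℕ, (∀ j < m, c j ≤ c (j + 1)) → c 0 ≤ c m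
  | 0, _ => le_rfl
  | (m + 1), h =>
    le_trans (chain_le c m (fun j hj => h j (by omega))) (h m (by omega))

theorem nested (f : ℕ → ℝ) (c : ℕ → ℕ) (m : ℕ) (hc : ∀ j < m, c j ≤ c (j + 1)) :
    ∑ j ∈ Finset.range m, ∑ i ∈ Finset.Ico (c j) (c (j + 1)), f i
      = ∑ i ∈ Finset.Ico (c 0) (c m), f i := by
  induction m with
  | zero => simp
  | succ m ih =>
    rw [Finset.sum_range_succ, ih (fun j hj => hc j (by omega)),
      Finset.sum_Ico_consecutive f (chain_le c m (fun j hj => hc j (by omega)))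
        (hc m (by omega))]

theorem upperSum_refine {a b M : ℝ} {h G : ℝ → ℝ}
    (hG : MonotoneOn G (Set.Icc a b)) (hM : ∀ x ∈ Set.Icc a b, |h x| ≤ M)
    {n m : ℕ} {p q : ℕ → ℝ} (hp : IsPartition a b n p) (hq : IsPartition a b m q)
    (hsub : ∀ j ≤ m, ∃ i ≤ n, p i = q j) :
    upperSum h G n p ≤ upperSum h G m q := by
  classical
  rcases Nat.eq_zero_or_pos m with hm | hm
  · subst hm
    have hba : b = a := hq.2.1 ▸ hq.1 ▸ rfl
    have hz : upperSum h G n p = 0 := by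
      apply Finset.sum_eq_zero
      intro i hi
      have hi' : i < n := Finset.mem_range.mp hi
      have e1 : p i = a := le_antisymm (hba ▸ (part_mem hp hi'.le).2) (part_mem hp hi'.le).1
      have e2 : p (i + 1) = a := le_antisymm (hba ▸ (part_mem hp hi').2) (part_mem hp hi').1
      rw [e1, e2, sub_self, mul_zero]
    rw [hz]; unfold upperSum; simp
  · set c : ℕ → ℕ := fun j => if j = 0 then 0 else Nat.findGreatest (fun i => p i ≤ q j) n
      with hcdef
    have hcle : ∀ j, c j ≤ n := by
      intro j; by_cases hj : j = 0 <;> simp [hcdef, hj, Nat.findGreatest_le]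
    have hpc : ∀ j ≤ m, p (c j) = q j := by
      intro j hj
      by_cases hj0 : j = 0
      · subst hj0; simp only [hcdef, if_pos rfl]; rw [hp.1, hq.1]
      · obtain ⟨i, hi, hpi⟩ := hsub j hj
        have h1 : i ≤ Nat.findGreatest (fun i => p i ≤ q j) n :=
          Nat.le_findGreatest hi (le_of_eq hpi)
        have h2 : p (Nat.findGreatest (fun i => p i ≤ q j) n) ≤ q j :=
          Nat.findGreatest_spec (P := fun i => p i ≤ q j) hi (le_of_eq hpi)
        have h3 : q j ≤ p (Nat.findGreatest (fun i => p i ≤ q j) n) :=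
          le_trans (le_of_eq hpi.symm) (part_mono hp h1 (Nat.findGreatest_le n))
        simp only [hcdef, if_neg hj0]
        exact le_antisymm h2 h3
    have hcm : c m = n := by
      refine le_antisymm (hcle m) ?_
      have hm0 : m ≠ 0 := by omega
      simp only [hcdef, if_neg hm0]
      exact Nat.le_findGreatest le_rfl (by rw [hp.2.1, hq.2.1])
    have hcmono : ∀ j < m, c j ≤ c (j + 1) := by
      intro j hj
      by_cases hj0 : j = 0
      · simp [hcdef, hj0]
      · simp only [hcdef, if_neg hj0, if_neg (Nat.succ_ne_zero j)]
        exact Nat.findGreatest_mono (fun i hi => le_trans hi (hq.2.2 j hj)) le_rfl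
    have key : ∀ j ∈ Finset.range m,
        (∑ i ∈ Finset.Ico (c j) (c (j + 1)),
          sSup (h '' Set.Icc (p i) (p (i + 1))) * (G (p (i + 1)) - G (p i)))
        ≤ sSup (h '' Set.Icc (q j) (q (j + 1))) * (G (q (j + 1)) - G (q j)) := by
      intro j hjr
      have hj : j < m := Finset.mem_range.mp hjr
      have hqj : q j ≤ q (j + 1) := hq.2.2 j hj
      have hqmem : Set.Icc (q j) (q (j + 1)) ⊆ Set.Icc a b :=
        Set.Icc_subset_Icc (part_mem hq hj.le).1 (part_mem hq hj).2
      have step : ∀ i ∈ Finset.Ico (c j) (c (j + 1)),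
          sSup (h '' Set.Icc (p i) (p (i + 1))) * (G (p (i + 1)) - G (p i))
          ≤ sSup (h '' Set.Icc (q j) (q (j + 1))) * (G (p (i + 1)) - G (p i)) := by
        intro i hi
        obtain ⟨hi1, hi2⟩ := Finset.mem_Ico.mp hi
        have hin : i + 1 ≤ n := le_trans hi2 (hcle (j + 1))
        have hpi : p i ≤ p (i + 1) := hp.2.2 i (by omega)
        have hl : q j ≤ p i := (hpc j hj.le) ▸ part_mono hp hi1 (by omega)
        have hr : p (i + 1) ≤ q (j + 1) := (hpc (j + 1) hj) ▸ part_mono hp hi2 (hcle (j + 1))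
        have h1 : sSup (h '' Set.Icc (p i) (p (i + 1)))
            ≤ sSup (h '' Set.Icc (q j) (q (j + 1))) :=
          csSup_le_csSup (img_bddAbove hM hqmem) (img_ne hpi)
            (Set.image_mono (Set.Icc_subset_Icc hl hr))
        have h2 : 0 ≤ G (p (i + 1)) - G (p i) :=
          sub_nonneg.mpr (hG (part_mem hp (by omega)) (part_mem hp hin) hpi)
        exact mul_le_mul_of_nonneg_right h1 h2
      calc (∑ i ∈ Finset.Ico (c j) (c (j + 1)),
              sSup (h '' Set.Icc (p i) (p (i + 1))) * (G (p (i + 1)) - G (p i)))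
          ≤ ∑ i ∈ Finset.Ico (c j) (c (j + 1)),
              sSup (h '' Set.Icc (q j) (q (j + 1))) * (G (p (i + 1)) - G (p i)) :=
            Finset.sum_le_sum step
        _ = sSup (h '' Set.Icc (q j) (q (j + 1)))
              * ∑ i ∈ Finset.Ico (c j) (c (j + 1)), (G (p (i + 1)) - G (p i)) := by
            rw [Finset.mul_sum]
        _ = sSup (h '' Set.Icc (q j) (q (j + 1)))
              * (G (p (c (j + 1))) - G (p (c j))) := by
            rw [tel (fun i => G (p i)) (hcmono j hj)]
        _ = sSup (h '' Set.Icc (q j) (q (j + 1))) * (G (q (j + 1)) - G (q j)) := by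
            rw [hpc j hj.le, hpc (j + 1) hj]
    have e1 : upperSum h G n p = ∑ j ∈ Finset.range m,
        ∑ i ∈ Finset.Ico (c j) (c (j + 1)),
          sSup (h '' Set.Icc (p i) (p (i + 1))) * (G (p (i + 1)) - G (p i)) := by
      rw [nested _ c m hcmono, hcm]
      have : c 0 = 0 := by simp [hcdef]
      rw [this]
      unfold upperSum
      rw [Finset.range_eq_Ico]
    rw [e1]
    exact Finset.sum_le_sum key

theorem lowerSum_refine {a b M : ℝ} {h G : ℝ → ℝ}
    (hG : MonotoneOn G (Set.Icc a b)) (hM : ∀ x ∈ Set.Icc a b, |h x| ≤ M)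
    {n m : ℕ} {p q : ℕ → ℝ} (hp : IsPartition a b n p) (hq : IsPartition a b m q)
    (hsub : ∀ j ≤ m, ∃ i ≤ n, p i = q j) :
    lowerSum h G m q ≤ lowerSum h G n p := by
  classical
  rcases Nat.eq_zero_or_pos m with hm | hm
  · subst hm
    have hba : b = a := hq.2.1 ▸ hq.1 ▸ rfl
    have hz : lowerSum h G n p = 0 := by
      apply Finset.sum_eq_zero
      intro i hi
      have hi' : i < n := Finset.mem_range.mp hi
      have e1 : p i = a := le_antisymm (hba ▸ (part_mem hp hi'.le).2) (part_mem hp hi'.le).1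
      have e2 : p (i + 1) = a := le_antisymm (hba ▸ (part_mem hp hi').2) (part_mem hp hi').1
      rw [e1, e2, sub_self, mul_zero]
    rw [hz]; unfold lowerSum; simp
  · set c : ℕ → ℕ := fun j => if j = 0 then 0 else Nat.findGreatest (fun i => p i ≤ q j) n
      with hcdef
    have hcle : ∀ j, c j ≤ n := by
      intro j; by_cases hj : j = 0 <;> simp [hcdef, hj, Nat.findGreatest_le]
    have hpc : ∀ j ≤ m, p (c j) = q j := by
      intro j hj
      by_cases hj0 : j = 0
      · subst hj0; simp only [hcdef, if_pos rfl]; rw [hp.1, hq.1]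
      · obtain ⟨i, hi, hpi⟩ := hsub j hj
        have h1 : i ≤ Nat.findGreatest (fun i => p i ≤ q j) n :=
          Nat.le_findGreatest hi (le_of_eq hpi)
        have h2 : p (Nat.findGreatest (fun i => p i ≤ q j) n) ≤ q j :=
          Nat.findGreatest_spec (P := fun i => p i ≤ q j) hi (le_of_eq hpi)
        have h3 : q j ≤ p (Nat.findGreatest (fun i => p i ≤ q j) n) :=
          le_trans (le_of_eq hpi.symm) (part_mono hp h1 (Nat.findGreatest_le n))
        simp only [hcdef, if_neg hj0]
        exact le_antisymm h2 h3
    have hcm : c m = n := by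
      refine le_antisymm (hcle m) ?_
      have hm0 : m ≠ 0 := by omega
      simp only [hcdef, if_neg hm0]
      exact Nat.le_findGreatest le_rfl (by rw [hp.2.1, hq.2.1])
    have hcmono : ∀ j < m, c j ≤ c (j + 1) := by
      intro j hj
      by_cases hj0 : j = 0
      · simp [hcdef, hj0]
      · simp only [hcdef, if_neg hj0, if_neg (Nat.succ_ne_zero j)]
        exact Nat.findGreatest_mono (fun i hi => le_trans hi (hq.2.2 j hj)) le_rfl
    have key : ∀ j ∈ Finset.range m,
        sInf (h '' Set.Icc (q j) (q (j + 1))) * (G (q (j + 1)) - G (q j))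
        ≤ ∑ i ∈ Finset.Ico (c j) (c (j + 1)),
          sInf (h '' Set.Icc (p i) (p (i + 1))) * (G (p (i + 1)) - G (p i)) := by
      intro j hjr
      have hj : j < m := Finset.mem_range.mp hjr
      have hqj : q j ≤ q (j + 1) := hq.2.2 j hj
      have hqmem : Set.Icc (q j) (q (j + 1)) ⊆ Set.Icc a b :=
        Set.Icc_subset_Icc (part_mem hq hj.le).1 (part_mem hq hj).2
      have step : ∀ i ∈ Finset.Ico (c j) (c (j + 1)),
          sInf (h '' Set.Icc (q j) (q (j + 1))) * (G (p (i + 1)) - G (p i))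
          ≤ sInf (h '' Set.Icc (p i) (p (i + 1))) * (G (p (i + 1)) - G (p i)) := by
        intro i hi
        obtain ⟨hi1, hi2⟩ := Finset.mem_Ico.mp hi
        have hin : i + 1 ≤ n := le_trans hi2 (hcle (j + 1))
        have hpi : p i ≤ p (i + 1) := hp.2.2 i (by omega)
        have hl : q j ≤ p i := (hpc j hj.le) ▸ part_mono hp hi1 (by omega)
        have hr : p (i + 1) ≤ q (j + 1) := (hpc (j + 1) hj) ▸ part_mono hp hi2 (hcle (j + 1))
        have h1 : sInf (h '' Set.Icc (q j) (q (j + 1)))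
            ≤ sInf (h '' Set.Icc (p i) (p (i + 1))) :=
          csInf_le_csInf (img_bddBelow hM hqmem) (img_ne hpi)
            (Set.image_mono (Set.Icc_subset_Icc hl hr))
        have h2 : 0 ≤ G (p (i + 1)) - G (p i) :=
          sub_nonneg.mpr (hG (part_mem hp (by omega)) (part_mem hp hin) hpi)
        exact mul_le_mul_of_nonneg_right h1 h2
      calc sInf (h '' Set.Icc (q j) (q (j + 1))) * (G (q (j + 1)) - G (q j))
          = sInf (h '' Set.Icc (q j) (q (j + 1)))
              * (G (p (c (j + 1))) - G (p (c j))) := by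
            rw [hpc j hj.le, hpc (j + 1) hj]
        _ = sInf (h '' Set.Icc (q j) (q (j + 1)))
              * ∑ i ∈ Finset.Ico (c j) (c (j + 1)), (G (p (i + 1)) - G (p i)) := by
            rw [tel (fun i => G (p i)) (hcmono j hj)]
        _ = ∑ i ∈ Finset.Ico (c j) (c (j + 1)),
              sInf (h '' Set.Icc (q j) (q (j + 1))) * (G (p (i + 1)) - G (p i)) := by
            rw [Finset.mul_sum]
        _ ≤ ∑ i ∈ Finset.Ico (c j) (c (j + 1)),
              sInf (h '' Set.Icc (p i) (p (i + 1))) * (G (p (i + 1)) - G (p i)) :=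
            Finset.sum_le_sum step
    have e1 : lowerSum h G n p = ∑ j ∈ Finset.range m,
        ∑ i ∈ Finset.Ico (c j) (c (j + 1)),
          sInf (h '' Set.Icc (p i) (p (i + 1))) * (G (p (i + 1)) - G (p i)) := by
      rw [nested _ c m hcmono, hcm]
      have : c 0 = 0 := by simp [hcdef]
      rw [this]
      unfold lowerSum
      rw [Finset.range_eq_Ico]
    rw [e1]
    exact Finset.sum_le_sum key

theorem lower_le_upper_self {a b M : ℝ} {h G : ℝ → ℝ}
    (hG : MonotoneOn G (Set.Icc a b)) (hM : ∀ x ∈ Set.Icc a b, |h x| ≤ M)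
    {n : ℕ} {p : ℕ → ℝ} (hp : IsPartition a b n p) :
    lowerSum h G n p ≤ upperSum h G n p := by
  apply Finset.sum_le_sum
  intro i hi
  have hi' : i < n := Finset.mem_range.mp hi
  have hpi : p i ≤ p (i + 1) := hp.2.2 i hi'
  have hsub : Set.Icc (p i) (p (i + 1)) ⊆ Set.Icc a b :=
    Set.Icc_subset_Icc (part_mem hp hi'.le).1 (part_mem hp hi').2
  have h1 : sInf (h '' Set.Icc (p i) (p (i + 1))) ≤ sSup (h '' Set.Icc (p i) (p (i + 1))) :=
    csInf_le_csSup (img_ne hpi) (img_bddBelow hM hsub) (img_bddAbove hM hsub)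
  have h2 : 0 ≤ G (p (i + 1)) - G (p i) :=
    sub_nonneg.mpr (hG (part_mem hp hi'.le) (part_mem hp hi') hpi)
  exact mul_le_mul_of_nonneg_right h1 h2

noncomputable def twoP (a b : ℝ) : ℕ → ℝ := fun k => if k = 0 then a else b

theorem twoP_part {a b : ℝ} (hab : a ≤ b) : IsPartition a b 1 (twoP a b) :=
  ⟨by simp [twoP], by simp [twoP], fun i hi => by
    interval_cases i
    simp [twoP, hab]⟩

theorem upperSum_twoP {a b : ℝ} {h G : ℝ → ℝ} :
    upperSum h G 1 (twoP a b) = sSup (h '' Set.Icc a b) * (G b - G a) := by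
  simp [upperSum, twoP]

theorem lowerSum_twoP {a b : ℝ} {h G : ℝ → ℝ} :
    lowerSum h G 1 (twoP a b) = sInf (h '' Set.Icc a b) * (G b - G a) := by
  simp [lowerSum, twoP]

/-- Insert a point into a partition. -/
noncomputable def insPt (a : ℝ) (p : ℕ → ℝ) (n : ℕ) (x : ℝ) : ℕ → ℝ :=
  fun k => if k = 0 then a else max (p (k - 1)) (min x (p (min k n)))

theorem insPt_part {a b x : ℝ} {n : ℕ} {p : ℕ → ℝ} (hp : IsPartition a b n p)
    (hx : x ∈ Set.Icc a b) : IsPartition a b (n + 1) (insPt a p n x) := by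
  refine ⟨rfl, ?_, ?_⟩
  · show (if n + 1 = 0 then a else max (p (n + 1 - 1)) (min x (p (min (n + 1) n)))) = b
    rw [if_neg (Nat.succ_ne_zero n)]
    simp only [Nat.add_sub_cancel, Nat.min_eq_right (Nat.le_succ n)]
    rw [max_eq_left (min_le_right _ _)]
    exact hp.2.1
  · intro i hi
    by_cases hi0 : i = 0
    · subst hi0
      show a ≤ if 1 = 0 then a else max (p (1 - 1)) (min x (p (min 1 n)))
      rw [if_neg one_ne_zero]
      show a ≤ max (p 0) _
      rw [hp.1]
      exact le_max_left _ _
    · show (if i = 0 then a else max (p (i - 1)) (min x (p (min i n))))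
        ≤ if i + 1 = 0 then a else max (p (i + 1 - 1)) (min x (p (min (i + 1) n)))
      rw [if_neg hi0, if_neg (Nat.succ_ne_zero i)]
      simp only [Nat.add_sub_cancel]
      apply max_le_max
      · exact part_mono hp (by omega) (by omega)
      · exact min_le_min le_rfl (part_mono hp (by omega : min i n ≤ min (i+1) n)
          (by omega : min (i+1) n ≤ n))

theorem insPt_old {a b x : ℝ} {n : ℕ} {p : ℕ → ℝ} (hp : IsPartition a b n p)
    {i : ℕ} (hi : i ≤ n) : ∃ k ≤ n + 1, insPt a p n x k = p i := by
  rcases le_total x (p i) with hx | hx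
  · refine ⟨i + 1, by omega, ?_⟩
    show (if i + 1 = 0 then a else max (p (i + 1 - 1)) (min x (p (min (i + 1) n)))) = p i
    rw [if_neg (Nat.succ_ne_zero i)]
    simp only [Nat.add_sub_cancel]
    exact max_eq_left (le_trans (min_le_left _ _) hx)
  · by_cases hi0 : i = 0
    · exact ⟨0, by omega, by subst hi0; exact hp.1.symm ▸ rfl⟩
    · refine ⟨i, by omega, ?_⟩
      show (if i = 0 then a else max (p (i - 1)) (min x (p (min i n)))) = p i
      rw [if_neg hi0, Nat.min_eq_left hi, min_eq_right hx]
      exact max_eq_right (part_mono hp (by omega) hi)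

theorem insPt_new {a b x : ℝ} {n : ℕ} {p : ℕ → ℝ} (hp : IsPartition a b n p)
    (hx : x ∈ Set.Icc a b) : ∃ k ≤ n + 1, insPt a p n x k = x := by
  classical
  set i₀ := Nat.findGreatest (fun i => p i ≤ x) n with hi₀def
  have h0 : p i₀ ≤ x := by
    rw [hi₀def]
    exact Nat.findGreatest_spec (P := fun i => p i ≤ x) (Nat.zero_le n)
      (by show p 0 ≤ x; rw [hp.1]; exact hx.1)
  have hin : i₀ ≤ n := Nat.findGreatest_le n
  rcases Nat.eq_or_lt_of_le hin with he | hl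
  · -- x = p n = b
    have hxb : x = b := le_antisymm hx.2 (hp.2.1 ▸ (he ▸ h0))
    refine ⟨n + 1, le_rfl, ?_⟩
    show (if n + 1 = 0 then a else max (p (n + 1 - 1)) (min x (p (min (n + 1) n)))) = x
    rw [if_neg (Nat.succ_ne_zero n)]
    simp only [Nat.add_sub_cancel, Nat.min_eq_right (Nat.le_succ n)]
    rw [max_eq_left (min_le_right _ _), hp.2.1, hxb]
  · have hgt : x < p (i₀ + 1) := by
      have := Nat.findGreatest_is_greatest (Nat.lt_succ_self i₀) hl
      exact lt_of_not_ge this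
    refine ⟨i₀ + 1, by omega, ?_⟩
    show (if i₀ + 1 = 0 then a else max (p (i₀ + 1 - 1)) (min x (p (min (i₀ + 1) n)))) = x
    rw [if_neg (Nat.succ_ne_zero i₀)]
    simp only [Nat.add_sub_cancel, Nat.min_eq_left hl]
    rw [min_eq_left hgt.le]
    exact max_eq_right h0

theorem exists_ref {a b : ℝ} {n : ℕ} {p : ℕ → ℝ} (hp : IsPartition a b n p)
    (w : ℕ → ℝ) (m : ℕ) (hw : ∀ j < m, w j ∈ Set.Icc a b) :
    ∃ N r, IsPartition a b N r ∧ (∀ i ≤ n, ∃ k ≤ N, r k = p i) ∧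
      (∀ j < m, ∃ k ≤ N, r k = w j) := by
  induction m with
  | zero => exact ⟨n, p, hp, fun i hi => ⟨i, hi, rfl⟩, fun j hj => absurd hj (by omega)⟩
  | succ m ih =>
    obtain ⟨N, r, hr, hrp, hrw⟩ := ih (fun j hj => hw j (by omega))
    have hwm : w m ∈ Set.Icc a b := hw m (by omega)
    refine ⟨N + 1, insPt a r N (w m), insPt_part hr hwm, ?_, ?_⟩
    · intro i hi
      obtain ⟨k, hk, hrk⟩ := hrp i hi
      obtain ⟨k', hk', e⟩ := insPt_old (x := w m) hr hk
      exact ⟨k', hk', by rw [e, hrk]⟩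
    · intro j hj
      rcases Nat.lt_or_ge j m with hjm | hjm
      · obtain ⟨k, hk, hrk⟩ := hrw j hjm
        obtain ⟨k', hk', e⟩ := insPt_old (x := w m) hr hk
        exact ⟨k', hk', by rw [e, hrk]⟩
      · have hjm' : j = m := by omega
        subst hjm'
        exact insPt_new hr hwm

theorem lower_le_upper_all {a b M : ℝ} {h G : ℝ → ℝ}
    (hG : MonotoneOn G (Set.Icc a b)) (hM : ∀ x ∈ Set.Icc a b, |h x| ≤ M)
    {n m : ℕ} {p q : ℕ → ℝ} (hp : IsPartition a b n p) (hq : IsPartition a b m q) :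
    lowerSum h G m q ≤ upperSum h G n p := by
  obtain ⟨N, r, hr, hrp, hrq⟩ := exists_ref hp q (m + 1) (fun j hj => part_mem hq (by omega))
  have h1 : upperSum h G N r ≤ upperSum h G n p :=
    upperSum_refine hG hM hr hp hrp
  have h2 : lowerSum h G m q ≤ lowerSum h G N r :=
    lowerSum_refine hG hM hr hq (fun j hj => hrq j (by omega))
  exact le_trans h2 (le_trans (lower_le_upper_self hG hM hr) h1)

theorem ne_upper {a b : ℝ} (hab : a ≤ b) (h G : ℝ → ℝ) :
    (upperSums h G a b).Nonempty := ⟨_, 1, twoP a b, twoP_part hab, rfl⟩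

theorem ne_lower {a b : ℝ} (hab : a ≤ b) (h G : ℝ → ℝ) :
    (lowerSums h G a b).Nonempty := ⟨_, 1, twoP a b, twoP_part hab, rfl⟩

theorem bddBelow_upper {a b M : ℝ} {h G : ℝ → ℝ} (hab : a ≤ b)
    (hG : MonotoneOn G (Set.Icc a b)) (hM : ∀ x ∈ Set.Icc a b, |h x| ≤ M) :
    BddBelow (upperSums h G a b) :=
  ⟨lowerSum h G 1 (twoP a b), by
    rintro u ⟨n, p, hp, rfl⟩
    exact lower_le_upper_all hG hM hp (twoP_part hab)⟩

theorem bddAbove_lower {a b M : ℝ} {h G : ℝ → ℝ} (hab : a ≤ b)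
    (hG : MonotoneOn G (Set.Icc a b)) (hM : ∀ x ∈ Set.Icc a b, |h x| ≤ M) :
    BddAbove (lowerSums h G a b) :=
  ⟨upperSum h G 1 (twoP a b), by
    rintro l ⟨m, q, hq, rfl⟩
    exact lower_le_upper_all hG hM (twoP_part hab) hq⟩

theorem sSup_le_sInf {a b M : ℝ} {h G : ℝ → ℝ} (hab : a ≤ b)
    (hG : MonotoneOn G (Set.Icc a b)) (hM : ∀ x ∈ Set.Icc a b, |h x| ≤ M) :
    sSup (lowerSums h G a b) ≤ sInf (upperSums h G a b) := by
  apply csSup_le (ne_lower hab h G)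
  rintro l ⟨m, q, hq, rfl⟩
  apply le_csInf (ne_upper hab h G)
  rintro u ⟨n, p, hp, rfl⟩
  exact lower_le_upper_all hG hM hp hq

theorem exists_good {a b M : ℝ} {h G : ℝ → ℝ} (hab : a ≤ b)
    (hG : MonotoneOn G (Set.Icc a b)) (hM : ∀ x ∈ Set.Icc a b, |h x| ≤ M)
    (hint : DSIntegrable h G a b) {ε : ℝ} (hε : 0 < ε) :
    ∃ n p, IsPartition a b n p ∧ upperSum h G n p ≤ DSIntegral h G a b + ε ∧
      DSIntegral h G a b - ε ≤ lowerSum h G n p := by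
  have h1 : sInf (upperSums h G a b) < DSIntegral h G a b + ε := by
    unfold DSIntegral; linarith
  obtain ⟨u, hu, hult⟩ := exists_lt_of_csInf_lt (ne_upper hab h G) h1
  obtain ⟨n₁, p₁, hp₁, hue⟩ := hu
  have h2 : DSIntegral h G a b - ε < sSup (lowerSums h G a b) := by
    unfold DSIntegral DSIntegrable at *
    rw [hint]; linarith
  obtain ⟨l, hl, hlgt⟩ := exists_lt_of_lt_csSup (ne_lower hab h G) h2
  obtain ⟨m₁, q₁, hq₁, hle⟩ := hl
  obtain ⟨N, r, hr, hrp, hrq⟩ := exists_ref hp₁ q₁ (m₁ + 1) (fun j hj => part_mem hq₁ (by omega))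
  refine ⟨N, r, hr, ?_, ?_⟩
  · calc upperSum h G N r ≤ upperSum h G n₁ p₁ := upperSum_refine hG hM hr hp₁ hrp
      _ = u := hue.symm
      _ ≤ DSIntegral h G a b + ε := hult.le
  · calc DSIntegral h G a b - ε ≤ l := hlgt.le
      _ = lowerSum h G m₁ q₁ := hle
      _ ≤ lowerSum h G N r := lowerSum_refine hG hM hr hq₁ (fun j hj => hrq j (by omega))

theorem DSIntegral_degenerate (ψ : ℝ → ℝ) (c : ℝ) : DSIntegral ψ id c c = 0 := by
  have : upperSums ψ id c c = {0} := by
    apply Set.eq_singleton_iff_unique_mem.mpr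
    constructor
    · refine ⟨1, twoP c c, twoP_part le_rfl, ?_⟩
      rw [upperSum_twoP]; simp
    · rintro u ⟨n, p, hp, rfl⟩
      apply Finset.sum_eq_zero
      intro i hi
      have hi' : i < n := Finset.mem_range.mp hi
      have e1 : p i = c := le_antisymm (part_mem hp hi'.le).2 (part_mem hp hi'.le).1
      have e2 : p (i + 1) = c := le_antisymm (part_mem hp hi').2 (part_mem hp hi').1
      rw [e1, e2, sub_self, mul_zero]
  unfold DSIntegral
  rw [this, csInf_singleton]

theorem DSIntegral_bounds {ψ : ℝ → ℝ} {Mψ c d : ℝ} {t : Set ℝ} (hcd : c ≤ d)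
    (hsub : Set.Icc c d ⊆ t) (hM : ∀ y ∈ t, |ψ y| ≤ Mψ) :
    sInf (ψ '' Set.Icc c d) * (d - c) ≤ DSIntegral ψ id c d ∧
      DSIntegral ψ id c d ≤ sSup (ψ '' Set.Icc c d) * (d - c) := by
  have hM' : ∀ y ∈ Set.Icc c d, |ψ y| ≤ Mψ := fun y hy => hM y (hsub hy)
  constructor
  · apply le_csInf (ne_upper hcd ψ id)
    rintro u ⟨n, p, hp, rfl⟩
    have key : ∀ i ∈ Finset.range n,
        sInf (ψ '' Set.Icc c d) * (p (i + 1) - p i)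
          ≤ sSup (ψ '' Set.Icc (p i) (p (i + 1))) * (id (p (i + 1)) - id (p i)) := by
      intro i hi
      have hi' : i < n := Finset.mem_range.mp hi
      have hpi : p i ≤ p (i + 1) := hp.2.2 i hi'
      have hmem : p i ∈ Set.Icc c d := part_mem hp hi'.le
      have h1 : sInf (ψ '' Set.Icc c d) ≤ ψ (p i) :=
        csInf_le (img_bddBelow hM' (le_refl _)) ⟨p i, hmem, rfl⟩
      have h2 : ψ (p i) ≤ sSup (ψ '' Set.Icc (p i) (p (i + 1))) :=
        le_csSup (img_bddAbove hM' (Set.Icc_subset_Icc hmem.1 (part_mem hp hi').2))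
          ⟨p i, ⟨le_rfl, hpi⟩, rfl⟩
      have h3 : (0:ℝ) ≤ p (i + 1) - p i := sub_nonneg.mpr hpi
      simpa using mul_le_mul_of_nonneg_right (le_trans h1 h2) h3
    calc sInf (ψ '' Set.Icc c d) * (d - c)
        = ∑ i ∈ Finset.range n, sInf (ψ '' Set.Icc c d) * (p (i + 1) - p i) := by
          rw [← Finset.mul_sum, Finset.range_eq_Ico, tel p (Nat.zero_le n), hp.1, hp.2.1]
      _ ≤ upperSum ψ id n p := Finset.sum_le_sum key
  · have : upperSum ψ id 1 (twoP c d) = sSup (ψ '' Set.Icc c d) * (d - c) := by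
      rw [upperSum_twoP]; simp
    rw [← this]
    exact csInf_le (bddBelow_upper hcd monotoneOn_id hM') ⟨1, twoP c d, twoP_part hcd, rfl⟩

end DS13
namespace DS13

theorem key_upper {f ψ : ℝ → ℝ} {Mf Mψ c d : ℝ} {t : Set ℝ} (hcd : c ≤ d)
    (hsub : Set.Icc c d ⊆ t)
    (hψM : ∀ y ∈ t, |ψ y| ≤ Mψ) (hψ0 : ∀ y ∈ t, 0 ≤ ψ y)
    (hfM : ∀ y ∈ t, |f y| ≤ Mf) :
    sSup (f '' Set.Icc c d) * DSIntegral ψ id c d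
      ≤ sSup ((fun y => f y * ψ y) '' Set.Icc c d) * (d - c)
        + Mf * ((sSup (ψ '' Set.Icc c d) - sInf (ψ '' Set.Icc c d)) * (d - c)) := by
  have hMf0 : 0 ≤ Mf := le_trans (abs_nonneg _) (hfM c (hsub ⟨le_rfl, hcd⟩))
  rcases eq_or_lt_of_le hcd with he | hlt
  · rw [← he, DSIntegral_degenerate]
    simp
  · have hΔ : 0 < d - c := sub_pos.mpr hlt
    obtain ⟨hVl, hVu⟩ := DSIntegral_bounds hcd hsub hψM
    set m := sInf (ψ '' Set.Icc c d) with hmdef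
    set M := sSup (ψ '' Set.Icc c d) with hMdef
    set V := DSIntegral ψ id c d with hVdef
    set c₀ := V / (d - c) with hc₀def
    have hVc : V = c₀ * (d - c) := (div_mul_cancel₀ V (ne_of_gt hΔ)).symm
    have hc₀l : m ≤ c₀ := (le_div_iff₀ hΔ).mpr hVl
    have hc₀u : c₀ ≤ M := (div_le_iff₀ hΔ).mpr hVu
    have hm0 : 0 ≤ m := by
      apply le_csInf (img_ne hcd)
      rintro _ ⟨y, hy, rfl⟩
      exact hψ0 y (hsub hy)
    have hc₀0 : 0 ≤ c₀ := le_trans hm0 hc₀l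
    have main : sSup (f '' Set.Icc c d) * c₀
        ≤ sSup ((fun y => f y * ψ y) '' Set.Icc c d) + Mf * (M - m) := by
      apply le_of_forall_pos_le_add
      intro ε hε
      set δ := ε / (c₀ + 1) with hδdef
      have hδ0 : 0 < δ := div_pos hε (by linarith)
      obtain ⟨z, hz, hzgt⟩ := exists_lt_of_lt_csSup (img_ne (h := f) hcd)
        (show sSup (f '' Set.Icc c d) - δ < sSup (f '' Set.Icc c d) by linarith)
      obtain ⟨y, hy, rfl⟩ := hz
      have hyt : y ∈ t := hsub hy
      have hψy_m : m ≤ ψ y := csInf_le (img_bddBelow hψM hsub) ⟨y, hy, rfl⟩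
      have hψy_M : ψ y ≤ M := le_csSup (img_bddAbove hψM hsub) ⟨y, hy, rfl⟩
      have h1 : sSup (f '' Set.Icc c d) * c₀ ≤ (f y + δ) * c₀ :=
        mul_le_mul_of_nonneg_right (by linarith) hc₀0
      have hbd : BddAbove ((fun y => f y * ψ y) '' Set.Icc c d) := by
        apply img_bddAbove (M := Mf * Mψ) (t := t) _ hsub
        intro u hu
        rw [abs_mul]
        exact mul_le_mul (hfM u hu) (hψM u hu) (abs_nonneg _) hMf0
      have h2 : f y * ψ y ≤ sSup ((fun y => f y * ψ y) '' Set.Icc c d) :=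
        le_csSup hbd ⟨y, hy, rfl⟩
      have h3 : f y * (c₀ - ψ y) ≤ Mf * (M - m) := by
        have habs : |f y * (c₀ - ψ y)| ≤ Mf * (M - m) := by
          rw [abs_mul]
          apply mul_le_mul (hfM y hyt) _ (abs_nonneg _) hMf0
          rw [abs_le]
          constructor <;> linarith
        linarith [le_abs_self (f y * (c₀ - ψ y))]
      have h4 : δ * c₀ ≤ ε := by
        calc δ * c₀ ≤ δ * (c₀ + 1) := by nlinarith
          _ = ε := by rw [hδdef]; field_simp
      have hid : (f y + δ) * c₀ = f y * ψ y + f y * (c₀ - ψ y) + δ * c₀ := by ring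
      linarith
    calc sSup (f '' Set.Icc c d) * V = (sSup (f '' Set.Icc c d) * c₀) * (d - c) := by
          rw [hVc]; ring
      _ ≤ (sSup ((fun y => f y * ψ y) '' Set.Icc c d) + Mf * (M - m)) * (d - c) :=
          mul_le_mul_of_nonneg_right main hΔ.le
      _ = sSup ((fun y => f y * ψ y) '' Set.Icc c d) * (d - c) + Mf * ((M - m) * (d - c)) := by
          ring

theorem key_lower {f ψ : ℝ → ℝ} {Mf Mψ c d : ℝ} {t : Set ℝ} (hcd : c ≤ d)
    (hsub : Set.Icc c d ⊆ t)
    (hψM : ∀ y ∈ t, |ψ y| ≤ Mψ) (hψ0 : ∀ y ∈ t, 0 ≤ ψ y)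
    (hfM : ∀ y ∈ t, |f y| ≤ Mf) :
    sInf ((fun y => f y * ψ y) '' Set.Icc c d) * (d - c)
        - Mf * ((sSup (ψ '' Set.Icc c d) - sInf (ψ '' Set.Icc c d)) * (d - c))
      ≤ sInf (f '' Set.Icc c d) * DSIntegral ψ id c d := by
  have hMf0 : 0 ≤ Mf := le_trans (abs_nonneg _) (hfM c (hsub ⟨le_rfl, hcd⟩))
  rcases eq_or_lt_of_le hcd with he | hlt
  · rw [← he, DSIntegral_degenerate]
    simp
  · have hΔ : 0 < d - c := sub_pos.mpr hlt
    obtain ⟨hVl, hVu⟩ := DSIntegral_bounds hcd hsub hψM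
    set m := sInf (ψ '' Set.Icc c d) with hmdef
    set M := sSup (ψ '' Set.Icc c d) with hMdef
    set V := DSIntegral ψ id c d with hVdef
    set c₀ := V / (d - c) with hc₀def
    have hVc : V = c₀ * (d - c) := (div_mul_cancel₀ V (ne_of_gt hΔ)).symm
    have hc₀l : m ≤ c₀ := (le_div_iff₀ hΔ).mpr hVl
    have hc₀u : c₀ ≤ M := (div_le_iff₀ hΔ).mpr hVu
    have hm0 : 0 ≤ m := by
      apply le_csInf (img_ne hcd)
      rintro _ ⟨y, hy, rfl⟩
      exact hψ0 y (hsub hy)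
    have hc₀0 : 0 ≤ c₀ := le_trans hm0 hc₀l
    have main : sInf ((fun y => f y * ψ y) '' Set.Icc c d) - Mf * (M - m)
        ≤ sInf (f '' Set.Icc c d) * c₀ := by
      apply le_of_forall_pos_le_add
      intro ε hε
      set δ := ε / (c₀ + 1) with hδdef
      have hδ0 : 0 < δ := div_pos hε (by linarith)
      obtain ⟨z, hz, hzlt⟩ := exists_lt_of_csInf_lt (img_ne (h := f) hcd)
        (show sInf (f '' Set.Icc c d) < sInf (f '' Set.Icc c d) + δ by linarith)
      obtain ⟨y, hy, rfl⟩ := hz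
      have hyt : y ∈ t := hsub hy
      have hψy_m : m ≤ ψ y := csInf_le (img_bddBelow hψM hsub) ⟨y, hy, rfl⟩
      have hψy_M : ψ y ≤ M := le_csSup (img_bddAbove hψM hsub) ⟨y, hy, rfl⟩
      have h1 : (f y - δ) * c₀ ≤ sInf (f '' Set.Icc c d) * c₀ :=
        mul_le_mul_of_nonneg_right (by linarith) hc₀0
      have hbd : BddBelow ((fun y => f y * ψ y) '' Set.Icc c d) := by
        apply img_bddBelow (M := Mf * Mψ) (t := t) _ hsub
        intro u hu
        rw [abs_mul]
        exact mul_le_mul (hfM u hu) (hψM u hu) (abs_nonneg _) hMf0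
      have h2 : sInf ((fun y => f y * ψ y) '' Set.Icc c d) ≤ f y * ψ y :=
        csInf_le hbd ⟨y, hy, rfl⟩
      have h3 : -(Mf * (M - m)) ≤ f y * (c₀ - ψ y) := by
        have habs : |f y * (c₀ - ψ y)| ≤ Mf * (M - m) := by
          rw [abs_mul]
          apply mul_le_mul (hfM y hyt) _ (abs_nonneg _) hMf0
          rw [abs_le]
          constructor <;> linarith
        linarith [neg_abs_le (f y * (c₀ - ψ y))]
      have h4 : δ * c₀ ≤ ε := by
        calc δ * c₀ ≤ δ * (c₀ + 1) := by nlinarith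
          _ = ε := by rw [hδdef]; field_simp
      have hid : (f y - δ) * c₀ = f y * ψ y + f y * (c₀ - ψ y) - δ * c₀ := by ring
      linarith
    calc sInf ((fun y => f y * ψ y) '' Set.Icc c d) * (d - c) - Mf * ((M - m) * (d - c))
        = (sInf ((fun y => f y * ψ y) '' Set.Icc c d) - Mf * (M - m)) * (d - c) := by ring
      _ ≤ (sInf (f '' Set.Icc c d) * c₀) * (d - c) :=
          mul_le_mul_of_nonneg_right main hΔ.le
      _ = sInf (f '' Set.Icc c d) * V := by rw [hVc]; ring

end DS13
open DS13 in
/-- if `(f∘Φ)(ψ∘Φ)` is integrable with respect to `Φ` and `ψ` is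
integrable, then `f∘Φ` is integrable with respect to `Ψ∘Φ` with the same integral. -/
theorem stmt13 (a b : ℝ) (hab : a ≤ b) (Φ ψ Ψ f : ℝ → ℝ) (Mf : ℝ)
    (hΦc : ContinuousOn Φ (Set.Icc a b)) (hΦm : MonotoneOn Φ (Set.Icc a b))
    (hψ0 : ∀ y ∈ Set.Icc (Φ a) (Φ b), 0 ≤ ψ y)
    (hψb : BddOn ψ (Set.Icc (Φ a) (Φ b)))
    (hψi : DSIntegrable ψ id (Φ a) (Φ b))
    (hΨm : MonotoneOn Ψ (Set.Icc (Φ a) (Φ b)))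
    (hΨ : ∀ y₁ ∈ Set.Icc (Φ a) (Φ b), ∀ y₂ ∈ Set.Icc (Φ a) (Φ b), y₁ ≤ y₂ →
      Ψ y₂ - Ψ y₁ = DSIntegral ψ id y₁ y₂)
    (hf : ∀ y ∈ Set.Icc (Φ a) (Φ b), |f y| ≤ Mf)
    (hgi : DSIntegrable (fun x => f (Φ x) * ψ (Φ x)) Φ a b) :
    DSIntegrable (f ∘ Φ) (Ψ ∘ Φ) a b ∧
    DSIntegral (f ∘ Φ) (Ψ ∘ Φ) a b =
      DSIntegral (fun x => f (Φ x) * ψ (Φ x)) Φ a b := by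
  classical
  have hamem : a ∈ Set.Icc a b := ⟨le_rfl, hab⟩
  have hbmem : b ∈ Set.Icc a b := ⟨hab, le_rfl⟩
  have hyab : Φ a ≤ Φ b := hΦm hamem hbmem hab
  have hΦmem : ∀ x ∈ Set.Icc a b, Φ x ∈ Set.Icc (Φ a) (Φ b) :=
    fun x hx => ⟨hΦm hamem hx hx.1, hΦm hx hbmem hx.2⟩
  obtain ⟨Mψ, hMψ⟩ := hψb
  have hMf0 : 0 ≤ Mf := le_trans (abs_nonneg _) (hf (Φ a) ⟨le_rfl, hyab⟩)
  have hG : MonotoneOn (Ψ ∘ Φ) (Set.Icc a b) := fun x hx y hy hxy =>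
    hΨm (hΦmem _ hx) (hΦmem _ hy) (hΦm hx hy hxy)
  have hMh : ∀ x ∈ Set.Icc a b, |(f ∘ Φ) x| ≤ Mf := fun x hx => hf _ (hΦmem _ hx)
  have hMg : ∀ x ∈ Set.Icc a b, |(fun x => f (Φ x) * ψ (Φ x)) x| ≤ Mf * Mψ := by
    intro x hx
    show |f (Φ x) * ψ (Φ x)| ≤ Mf * Mψ
    rw [abs_mul]
    exact mul_le_mul (hf _ (hΦmem _ hx)) (hMψ _ (hΦmem _ hx)) (abs_nonneg _) hMf0
  have himg : ∀ x₁ ∈ Set.Icc a b, ∀ x₂ ∈ Set.Icc a b, x₁ ≤ x₂ →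
      Φ '' Set.Icc x₁ x₂ = Set.Icc (Φ x₁) (Φ x₂) := by
    intro x₁ h₁ x₂ h₂ h12
    apply Set.Subset.antisymm
    · rintro _ ⟨x, hx, rfl⟩
      have hxm : x ∈ Set.Icc a b := ⟨le_trans h₁.1 hx.1, le_trans hx.2 h₂.2⟩
      exact ⟨hΦm h₁ hxm hx.1, hΦm hxm h₂ hx.2⟩
    · exact intermediate_value_Icc h12 (hΦc.mono (Set.Icc_subset_Icc h₁.1 h₂.2))
  -- comparison of upper sums
  have cmpU : ∀ (n : ℕ) (p : ℕ → ℝ), IsPartition a b n p →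
      upperSum (f ∘ Φ) (Ψ ∘ Φ) n p ≤ upperSum (fun x => f (Φ x) * ψ (Φ x)) Φ n p
        + Mf * (upperSum ψ id n (Φ ∘ p) - lowerSum ψ id n (Φ ∘ p)) := by
    intro n p hp
    unfold upperSum lowerSum
    rw [← Finset.sum_sub_distrib, Finset.mul_sum, ← Finset.sum_add_distrib]
    apply Finset.sum_le_sum
    intro i hi
    have hi' : i < n := Finset.mem_range.mp hi
    have hpi : p i ≤ p (i + 1) := hp.2.2 i hi'
    have hm1 : p i ∈ Set.Icc a b := part_mem hp hi'.le
    have hm2 : p (i + 1) ∈ Set.Icc a b := part_mem hp hi'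
    have hcd : Φ (p i) ≤ Φ (p (i + 1)) := hΦm hm1 hm2 hpi
    have hsubt : Set.Icc (Φ (p i)) (Φ (p (i + 1))) ⊆ Set.Icc (Φ a) (Φ b) :=
      Set.Icc_subset_Icc (hΦmem _ hm1).1 (hΦmem _ hm2).2
    have e1 : (f ∘ Φ) '' Set.Icc (p i) (p (i + 1))
        = f '' Set.Icc (Φ (p i)) (Φ (p (i + 1))) := by
      rw [Set.image_comp, himg _ hm1 _ hm2 hpi]
    have e2 : (fun x => f (Φ x) * ψ (Φ x)) '' Set.Icc (p i) (p (i + 1))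
        = (fun y => f y * ψ y) '' Set.Icc (Φ (p i)) (Φ (p (i + 1))) := by
      rw [show (fun x => f (Φ x) * ψ (Φ x)) = (fun y => f y * ψ y) ∘ Φ from rfl,
        Set.image_comp, himg _ hm1 _ hm2 hpi]
    have e3 : Ψ (Φ (p (i + 1))) - Ψ (Φ (p i))
        = DSIntegral ψ id (Φ (p i)) (Φ (p (i + 1))) :=
      hΨ _ (hΦmem _ hm1) _ (hΦmem _ hm2) hcd
    rw [e1, e2]
    simp only [Function.comp_apply, id_eq]
    rw [e3]
    refine le_trans (key_upper hcd hsubt hMψ hψ0 hf) (le_of_eq ?_)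
    ring
  -- comparison of lower sums
  have cmpL : ∀ (n : ℕ) (p : ℕ → ℝ), IsPartition a b n p →
      lowerSum (fun x => f (Φ x) * ψ (Φ x)) Φ n p
        - Mf * (upperSum ψ id n (Φ ∘ p) - lowerSum ψ id n (Φ ∘ p))
      ≤ lowerSum (f ∘ Φ) (Ψ ∘ Φ) n p := by
    intro n p hp
    unfold upperSum lowerSum
    rw [← Finset.sum_sub_distrib, Finset.mul_sum, ← Finset.sum_sub_distrib]
    apply Finset.sum_le_sum
    intro i hi
    have hi' : i < n := Finset.mem_range.mp hi
    have hpi : p i ≤ p (i + 1) := hp.2.2 i hi'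
    have hm1 : p i ∈ Set.Icc a b := part_mem hp hi'.le
    have hm2 : p (i + 1) ∈ Set.Icc a b := part_mem hp hi'
    have hcd : Φ (p i) ≤ Φ (p (i + 1)) := hΦm hm1 hm2 hpi
    have hsubt : Set.Icc (Φ (p i)) (Φ (p (i + 1))) ⊆ Set.Icc (Φ a) (Φ b) :=
      Set.Icc_subset_Icc (hΦmem _ hm1).1 (hΦmem _ hm2).2
    have e1 : (f ∘ Φ) '' Set.Icc (p i) (p (i + 1))
        = f '' Set.Icc (Φ (p i)) (Φ (p (i + 1))) := by
      rw [Set.image_comp, himg _ hm1 _ hm2 hpi]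
    have e2 : (fun x => f (Φ x) * ψ (Φ x)) '' Set.Icc (p i) (p (i + 1))
        = (fun y => f y * ψ y) '' Set.Icc (Φ (p i)) (Φ (p (i + 1))) := by
      rw [show (fun x => f (Φ x) * ψ (Φ x)) = (fun y => f y * ψ y) ∘ Φ from rfl,
        Set.image_comp, himg _ hm1 _ hm2 hpi]
    have e3 : Ψ (Φ (p (i + 1))) - Ψ (Φ (p i))
        = DSIntegral ψ id (Φ (p i)) (Φ (p (i + 1))) :=
      hΨ _ (hΦmem _ hm1) _ (hΦmem _ hm2) hcd
    rw [e1, e2]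
    simp only [Function.comp_apply, id_eq]
    rw [e3]
    refine le_trans (le_of_eq ?_) (key_lower hcd hsubt hMψ hψ0 hf)
    ring
  set v := DSIntegral (fun x => f (Φ x) * ψ (Φ x)) Φ a b with hvdef
  have main : ∀ ε : ℝ, 0 < ε →
      sInf (upperSums (f ∘ Φ) (Ψ ∘ Φ) a b) ≤ v + (1 + 2 * Mf) * ε ∧
      v - (1 + 2 * Mf) * ε ≤ sSup (lowerSums (f ∘ Φ) (Ψ ∘ Φ) a b) := by
    intro ε hε
    obtain ⟨n₁, p₁, hp₁, hU₁, hL₁⟩ := exists_good hab hΦm hMg hgi hε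
    rw [← hvdef] at hU₁ hL₁
    obtain ⟨m₀, q₀, hq₀, hU₀, hL₀⟩ := exists_good hyab monotoneOn_id hMψ hψi hε
    have hpre : ∀ j : ℕ, ∃ x, x ∈ Set.Icc a b ∧ (j ≤ m₀ → Φ x = q₀ j) := by
      intro j
      by_cases hj : j ≤ m₀
      · obtain ⟨x, hx, he⟩ := intermediate_value_Icc hab hΦc (part_mem hq₀ hj)
        exact ⟨x, hx, fun _ => he⟩
      · exact ⟨a, ⟨le_rfl, hab⟩, fun h => absurd h hj⟩
    choose x hxmem hΦx using hpre
    obtain ⟨N, r, hr, hrp, hrx⟩ := exists_ref hp₁ x (m₀ + 1) (fun j _ => hxmem j)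
    have hQ : IsPartition (Φ a) (Φ b) N (Φ ∘ r) :=
      ⟨congrArg Φ hr.1, congrArg Φ hr.2.1,
        fun i hi => hΦm (part_mem hr hi.le) (part_mem hr hi) (hr.2.2 i hi)⟩
    have hQsub : ∀ j ≤ m₀, ∃ k ≤ N, (Φ ∘ r) k = q₀ j := by
      intro j hj
      obtain ⟨k, hk, e⟩ := hrx j (by omega)
      refine ⟨k, hk, ?_⟩
      show Φ (r k) = q₀ j
      rw [e]
      exact hΦx j hj
    have hSU : upperSum ψ id N (Φ ∘ r) ≤ upperSum ψ id m₀ q₀ :=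
      upperSum_refine monotoneOn_id hMψ hQ hq₀ hQsub
    have hSL : lowerSum ψ id m₀ q₀ ≤ lowerSum ψ id N (Φ ∘ r) :=
      lowerSum_refine monotoneOn_id hMψ hQ hq₀ hQsub
    have hS2 : upperSum ψ id N (Φ ∘ r) - lowerSum ψ id N (Φ ∘ r) ≤ 2 * ε := by linarith
    have hgU : upperSum (fun x => f (Φ x) * ψ (Φ x)) Φ N r ≤ v + ε :=
      le_trans (upperSum_refine hΦm hMg hr hp₁ hrp) hU₁
    have hgL : v - ε ≤ lowerSum (fun x => f (Φ x) * ψ (Φ x)) Φ N r :=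
      le_trans hL₁ (lowerSum_refine hΦm hMg hr hp₁ hrp)
    have hMfS : Mf * (upperSum ψ id N (Φ ∘ r) - lowerSum ψ id N (Φ ∘ r)) ≤ Mf * (2 * ε) :=
      mul_le_mul_of_nonneg_left hS2 hMf0
    constructor
    · have h1 : sInf (upperSums (f ∘ Φ) (Ψ ∘ Φ) a b) ≤ upperSum (f ∘ Φ) (Ψ ∘ Φ) N r :=
        csInf_le (bddBelow_upper hab hG hMh) ⟨N, r, hr, rfl⟩
      have h2 := cmpU N r hr
      linarith
    · have h1 : lowerSum (f ∘ Φ) (Ψ ∘ Φ) N r ≤ sSup (lowerSums (f ∘ Φ) (Ψ ∘ Φ) a b) :=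
        le_csSup (bddAbove_lower hab hG hMh) ⟨N, r, hr, rfl⟩
      have h2 := cmpL N r hr
      linarith
  have hsl := sSup_le_sInf hab hG hMh
  have hC : (0:ℝ) < 1 + 2 * Mf := by linarith
  have hCmul : ∀ ε : ℝ, (1 + 2 * Mf) * (ε / (1 + 2 * Mf)) = ε := by
    intro ε; field_simp
  have heq1 : sInf (upperSums (f ∘ Φ) (Ψ ∘ Φ) a b) ≤ v := by
    apply le_of_forall_pos_le_add
    intro ε hε
    have h := (main (ε / (1 + 2 * Mf)) (div_pos hε hC)).1
    rw [hCmul ε] at h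
    exact h
  have heq2 : v ≤ sSup (lowerSums (f ∘ Φ) (Ψ ∘ Φ) a b) := by
    apply le_of_forall_pos_le_add
    intro ε hε
    have h := (main (ε / (1 + 2 * Mf)) (div_pos hε hC)).2
    rw [hCmul ε] at h
    linarith
  have e1 : sInf (upperSums (f ∘ Φ) (Ψ ∘ Φ) a b) = v :=
    le_antisymm heq1 (le_trans heq2 hsl)
  have e2 : sSup (lowerSums (f ∘ Φ) (Ψ ∘ Φ) a b) = v :=
    le_antisymm (le_trans hsl heq1) heq2
  constructor
  · unfold DSIntegrable
    rw [e1, e2]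
  · unfold DSIntegral
    exact e1
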